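/- arXiv:2206.05558 — 3 statements merged into one kernel-verified Lean document; each statement's English description precedes it below -/
import Mathlib

section
/- Let S ∈ ℝ^{r×n} be a random matrix satisfying the (ε, δ)-sketch property: for matrices A, B with n rows, Pr[‖AᵀSᵀSB − AᵀB‖ > ε‖A‖_F‖B‖_F] ≤ δ. If S is an (ε/l, δ)-sketch matrix, then for any fixed A ∈ ℝ^{n×l} and all x ∈ ℝˡ simultaneously, with probability at least 1−δ: (1−ε)‖Ax‖² ≤ ‖SAx‖² ≤ (1+ε)‖Ax‖². -/
open MeasureTheory Matrix

/-- Frobenius norm of a matrix. -/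
noncomputable def frobNorm {m n : ℕ} (M : Matrix (Fin m) (Fin n) ℝ) : ℝ :=
  Real.sqrt (∑ i, ∑ j, (M i j) ^ 2)

section
open Finset
lemma frobNorm_nonneg {m n : ℕ} (M : Matrix (Fin m) (Fin n) ℝ) : 0 ≤ frobNorm M :=
  Real.sqrt_nonneg _

/-- Quadratic-form Cauchy–Schwarz against Frobenius norm. -/
lemma quadform_abs_le {k : ℕ} (M : Matrix (Fin k) (Fin k) ℝ) (y : Fin k → ℝ) :
    |∑ i, ∑ j, y i * M i j * y j| ≤ frobNorm M * ∑ i, (y i) ^ 2 := by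
  have key : (∑ p ∈ univ ×ˢ (univ : Finset (Fin k)), (y p.1 * y p.2) * M p.1 p.2) ^ 2
      ≤ (∑ p ∈ univ ×ˢ (univ : Finset (Fin k)), (y p.1 * y p.2) ^ 2) *
        ∑ p ∈ univ ×ˢ (univ : Finset (Fin k)), (M p.1 p.2) ^ 2 :=
    Finset.sum_mul_sq_le_sq_mul_sq _ _ _
  have h1 : (∑ p ∈ univ ×ˢ (univ : Finset (Fin k)), (y p.1 * y p.2) * M p.1 p.2)
      = ∑ i, ∑ j, y i * M i j * y j := by
    rw [Finset.sum_product]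
    exact Finset.sum_congr rfl fun i _ => Finset.sum_congr rfl fun j _ => by ring
  have h2 : (∑ p ∈ univ ×ˢ (univ : Finset (Fin k)), (y p.1 * y p.2) ^ 2)
      = (∑ i, (y i) ^ 2) ^ 2 := by
    rw [Finset.sum_product, sq (∑ i, (y i) ^ 2), Finset.sum_mul_sum]
    exact Finset.sum_congr rfl fun i _ => Finset.sum_congr rfl fun j _ => by ring
  have h3 : (∑ p ∈ univ ×ˢ (univ : Finset (Fin k)), (M p.1 p.2) ^ 2)
      = ∑ i, ∑ j, (M i j) ^ 2 := by rw [Finset.sum_product]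
  rw [h1, h2, h3] at key
  have hy : (0:ℝ) ≤ ∑ i, (y i) ^ 2 := Finset.sum_nonneg fun _ _ => sq_nonneg _
  have hM : (0:ℝ) ≤ ∑ i, ∑ j, (M i j) ^ 2 :=
    Finset.sum_nonneg fun _ _ => Finset.sum_nonneg fun _ _ => sq_nonneg _
  calc |∑ i, ∑ j, y i * M i j * y j| = Real.sqrt ((∑ i, ∑ j, y i * M i j * y j) ^ 2) :=
        (Real.sqrt_sq_eq_abs _).symm
    _ ≤ Real.sqrt ((∑ i, (y i) ^ 2) ^ 2 * ∑ i, ∑ j, (M i j) ^ 2) := by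
        apply Real.sqrt_le_sqrt; linarith [key]
    _ = frobNorm M * ∑ i, (y i) ^ 2 := by
        rw [Real.sqrt_mul (sq_nonneg _), Real.sqrt_sq hy, frobNorm, mul_comm]

/-- Sum of squares of `M.mulVec y` as a quadratic form in `MᵀM`. -/
lemma sum_sq_mulVec {r k : ℕ} (M : Matrix (Fin r) (Fin k) ℝ) (y : Fin k → ℝ) :
    ∑ j, (M.mulVec y j) ^ 2 = ∑ a, ∑ b, y a * (Mᵀ * M) a b * y b := by
  simp only [Matrix.mulVec, dotProduct, Matrix.mul_apply, Matrix.transpose_apply,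
    sq, Finset.sum_mul, Finset.mul_sum]
  rw [Finset.sum_comm]
  refine Finset.sum_congr rfl fun a _ => ?_
  rw [Finset.sum_comm]
  refine Finset.sum_congr rfl fun b _ => Finset.sum_congr rfl fun j _ => by ring

lemma exists_orthonormal_factorization {n l : ℕ} (A : Matrix (Fin n) (Fin l) ℝ) :
    ∃ (k : ℕ) (U : Matrix (Fin n) (Fin k) ℝ) (C : Matrix (Fin k) (Fin l) ℝ),
      k ≤ l ∧ Uᵀ * U = 1 ∧ A = U * C := by
  classical
  set E := EuclideanSpace ℝ (Fin n)
  let L := WithLp.linearEquiv 2 ℝ (Fin n → ℝ)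
  let f : Fin l → E := fun j => L.symm (fun i => A i j)
  set V : Submodule ℝ E := Submodule.span ℝ (Set.range f) with hV
  set k := Module.finrank ℝ V with hk
  have hkl : k ≤ l := by
    have := finrank_range_le_card (R := ℝ) f
    simpa [Set.finrank, Fintype.card_fin] using this
  let b : OrthonormalBasis (Fin k) ℝ V := stdOrthonormalBasis ℝ V
  let U : Matrix (Fin n) (Fin k) ℝ := fun i j => L ((b j : E)) i
  have hmem : ∀ i, f i ∈ V := fun i => Submodule.subset_span ⟨i, rfl⟩
  let C : Matrix (Fin k) (Fin l) ℝ := fun j i => b.repr ⟨f i, hmem i⟩ j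
  have hinner : ∀ u v : E, (inner ℝ u v : ℝ) = ∑ i, L u i * L v i := fun u v => by
    rw [PiLp.inner_apply]
    exact Finset.sum_congr rfl fun i _ => by simp [RCLike.inner_apply]; exact mul_comm _ _
  refine ⟨k, U, C, hkl, ?_, ?_⟩
  · ext j j'
    have := orthonormal_iff_ite.mp b.orthonormal j j'
    rw [Submodule.coe_inner, hinner] at this
    simp only [Matrix.mul_apply, Matrix.transpose_apply, Matrix.one_apply, U]
    exact this
  · ext i i'
    have h := b.sum_repr ⟨f i', hmem i'⟩
    have h2 : ((∑ j, b.repr ⟨f i', hmem i'⟩ j • b j : V) : E) = f i' := by rw [h]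
    rw [Submodule.coe_sum] at h2
    simp only [Submodule.coe_smul] at h2
    have hmap : L (∑ j, b.repr ⟨f i', hmem i'⟩ j • ((b j : E))) =
        ∑ j, b.repr ⟨f i', hmem i'⟩ j • L ((b j : E)) := by
      rw [map_sum]
      exact Finset.sum_congr rfl fun j _ => (map_smul L _ _)
    have h2' := hmap.symm.trans (congrArg L h2)
    have h4 := congrFun h2' i
    rw [Finset.sum_apply] at h4
    have h5 : L (f i') = fun i => A i i' := L.apply_symm_apply _
    simp only [Matrix.mul_apply, U, C]
    rw [show A i i' = L (f i') i from (congrFun h5 i).symm, ← h4]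
    simp only [Pi.smul_apply, smul_eq_mul]
    exact Finset.sum_congr rfl fun j _ => mul_comm _ _

end

/-- Subspace embedding from the approximate-matrix-multiplication sketch property:
if `S` is an `(ε/l, δ)`-sketch matrix, then for any fixed `A ∈ ℝ^{n×l}`, with probability
at least `1 − δ`, simultaneously for all `x`, `(1−ε)‖Ax‖² ≤ ‖SAx‖² ≤ (1+ε)‖Ax‖²`. -/
theorem sketch_subspace_embedding
    {r n l : ℕ} (hl : 0 < l)
    (Ω : Type) [MeasurableSpace Ω] (P : Measure Ω) [IsProbabilityMeasure P]
    (S : Ω → Matrix (Fin r) (Fin n) ℝ)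
    (ε δ : ℝ) (hε : 0 < ε) (hδ : 0 < δ)
    (hsketch : ∀ (m₁ m₂ : ℕ) (A : Matrix (Fin n) (Fin m₁) ℝ) (B : Matrix (Fin n) (Fin m₂) ℝ),
      P {ω | frobNorm (Aᵀ * (S ω)ᵀ * S ω * B - Aᵀ * B) > (ε / l) * frobNorm A * frobNorm B}
        ≤ ENNReal.ofReal δ)
    (A : Matrix (Fin n) (Fin l) ℝ) :
    ENNReal.ofReal (1 - δ) ≤
      P {ω | ∀ x : Fin l → ℝ,
        (1 - ε) * (∑ i, (A.mulVec x i) ^ 2) ≤ ∑ j, ((S ω * A).mulVec x j) ^ 2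
        ∧ ∑ j, ((S ω * A).mulVec x j) ^ 2 ≤ (1 + ε) * (∑ i, (A.mulVec x i) ^ 2)} := by
  obtain ⟨k, U, C, hkl, hUU, hAUC⟩ := exists_orthonormal_factorization A
  -- Frobenius norm of U squared equals k
  have hcol : ∀ j, ∑ i, (U i j) ^ 2 = 1 := by
    intro j
    have := congrFun (congrFun hUU j) j
    simpa [Matrix.mul_apply, Matrix.transpose_apply, Matrix.one_apply, sq] using this
  have hfrobU : frobNorm U * frobNorm U = (k : ℝ) := by
    rw [frobNorm, Real.mul_self_sqrt (show (0:ℝ) ≤ ∑ i, ∑ j, (U i j) ^ 2 from Finset.sum_nonneg fun _ _ =>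
      Finset.sum_nonneg fun _ _ => sq_nonneg _), Finset.sum_comm]
    simp [hcol]
  have hbound : (ε / l) * frobNorm U * frobNorm U ≤ ε := by
    rw [mul_assoc, hfrobU, div_mul_eq_mul_div, div_le_iff₀ (by exact_mod_cast hl)]
    have : (k : ℝ) ≤ l := by exact_mod_cast hkl
    nlinarith
  set Bad := {ω | frobNorm (Uᵀ * (S ω)ᵀ * S ω * U - Uᵀ * U) >
      (ε / l) * frobNorm U * frobNorm U} with hBadDef
  have hPBad : P Bad ≤ ENNReal.ofReal δ := hsketch k k U U
  -- the complement of Bad is contained in the target event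
  have hsub : Badᶜ ⊆ {ω | ∀ x : Fin l → ℝ,
        (1 - ε) * (∑ i, (A.mulVec x i) ^ 2) ≤ ∑ j, ((S ω * A).mulVec x j) ^ 2
        ∧ ∑ j, ((S ω * A).mulVec x j) ^ 2 ≤ (1 + ε) * (∑ i, (A.mulVec x i) ^ 2)} := by
    intro ω hω x
    have hfrob : frobNorm (Uᵀ * (S ω)ᵀ * S ω * U - Uᵀ * U) ≤ ε :=
      le_trans (not_lt.mp hω) hbound
    set y := C.mulVec x with hy
    have hAx : A.mulVec x = U.mulVec y := by rw [hAUC, ← Matrix.mulVec_mulVec]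
    have hSAx : (S ω * A).mulVec x = (S ω * U).mulVec y := by
      rw [hAUC, ← Matrix.mul_assoc, ← Matrix.mulVec_mulVec]
    have hA2 : ∑ i, (A.mulVec x i) ^ 2 = ∑ a, (y a) ^ 2 := by
      rw [hAx, sum_sq_mulVec U y, hUU]
      simp [Matrix.one_apply, mul_ite, ite_mul, sq]
    have htr : (S ω * U)ᵀ * (S ω * U) = Uᵀ * (S ω)ᵀ * S ω * U := by
      rw [Matrix.transpose_mul, ← Matrix.mul_assoc]
    have hS2 : ∑ j, ((S ω * A).mulVec x j) ^ 2
        = ∑ a, ∑ b, y a * (Uᵀ * (S ω)ᵀ * S ω * U) a b * y b := by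
      rw [hSAx, sum_sq_mulVec (S ω * U) y, htr]
    have hdiff : ∑ j, ((S ω * A).mulVec x j) ^ 2 - ∑ i, (A.mulVec x i) ^ 2
        = ∑ a, ∑ b, y a * ((Uᵀ * (S ω)ᵀ * S ω * U - Uᵀ * U) a b) * y b := by
      rw [hS2, hAx, sum_sq_mulVec U y]
      rw [← Finset.sum_sub_distrib]
      refine Finset.sum_congr rfl fun a _ => ?_
      rw [← Finset.sum_sub_distrib]
      exact Finset.sum_congr rfl fun b _ => by simp [Matrix.sub_apply]; ring
    have hcs := quadform_abs_le (Uᵀ * (S ω)ᵀ * S ω * U - Uᵀ * U) y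
    have hynn : (0:ℝ) ≤ ∑ a, (y a) ^ 2 := Finset.sum_nonneg fun _ _ => sq_nonneg _
    have habs : |∑ j, ((S ω * A).mulVec x j) ^ 2 - ∑ i, (A.mulVec x i) ^ 2|
        ≤ ε * ∑ i, (A.mulVec x i) ^ 2 := by
      rw [hdiff, hA2]
      calc |∑ a, ∑ b, y a * ((Uᵀ * (S ω)ᵀ * S ω * U - Uᵀ * U) a b) * y b|
          ≤ frobNorm (Uᵀ * (S ω)ᵀ * S ω * U - Uᵀ * U) * ∑ a, (y a) ^ 2 := hcs
        _ ≤ ε * ∑ a, (y a) ^ 2 := mul_le_mul_of_nonneg_right hfrob hynn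
    obtain ⟨h1, h2⟩ := abs_le.mp habs
    constructor <;> nlinarith
  refine le_trans ?_ (measure_mono hsub)
  calc ENNReal.ofReal (1 - δ) = ENNReal.ofReal 1 - ENNReal.ofReal δ :=
        ENNReal.ofReal_sub _ hδ.le
    _ ≤ 1 - P Bad := by rw [ENNReal.ofReal_one]; exact tsub_le_tsub_left hPBad 1
    _ ≤ P Badᶜ := by
        rw [tsub_le_iff_right]
        have h1 : (1 : ENNReal) = P (Badᶜ ∪ Bad) := by
          rw [Set.compl_union_self, measure_univ]
        rw [h1]
        exact measure_union_le _ _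
end

section
/- Let S be a random r×n matrix constructed as follows: choose independent uniformly random h : [n] → [r] and random signs σ : [n] → {−1, +1}, and set S[h(i), i] = σ(i) with all other entries zero. If r > 18/(ε²δ) with ε, δ ∈ (0, 1/2), then for any fixed matrices A, B with n rows, Pr[‖AᵀSᵀSB − AᵀB‖ > ε‖A‖_F‖B‖_F] ≤ δ. -/
open MeasureTheory Matrix ProbabilityTheory

/-- Frobenius norm of a matrix. -/
noncomputable def frobNorm' {m n : ℕ} (M : Matrix (Fin m) (Fin n) ℝ) : ℝ :=
  Real.sqrt (∑ i, ∑ j, (M i j) ^ 2)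

open Finset
open scoped ENNReal

variable {r n : ℕ}

noncomputable def semSgn {r : ℕ} (a : Fin r × Bool) : ℝ := if a.2 then 1 else -1

noncomputable def semT {r : ℕ} (v : Fin r) (a : Fin r × Bool) : ℝ :=
  semSgn a * (if a.1 = v then 1 else 0)

noncomputable def semG {r n : ℕ} (x : Fin n → Fin r × Bool) (i i' : Fin n) : ℝ :=
  (if (x i).1 = (x i').1 then semSgn (x i) * semSgn (x i') else 0) - (if i = i' then 1 else 0)

lemma semSgn_sq (a : Fin r × Bool) : semSgn a * semSgn a = 1 := by
  unfold semSgn; cases a.2 <;> norm_num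

lemma sum_semT (v : Fin r) : ∑ a : Fin r × Bool, semT v a = 0 := by
  rw [Fintype.sum_prod_type]
  simp [semT, semSgn, Fintype.sum_sum_type]

lemma sum_semT_mul (v w : Fin r) :
    ∑ a : Fin r × Bool, semT v a * semT w a = if v = w then 2 else 0 := by
  have : ∀ a : Fin r × Bool, semT v a * semT w a
      = (if a.1 = v then 1 else 0) * (if a.1 = w then 1 else 0) := by
    intro a
    unfold semT
    rw [mul_mul_mul_comm, semSgn_sq, one_mul]
  rw [Finset.sum_congr rfl fun a _ => this a, Fintype.sum_prod_type]
  simp [Finset.sum_ite_eq, eq_comm]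

lemma sum_one_fin_bool : ∑ _a : Fin r × Bool, (1:ℝ) = 2 * r := by
  simp [Fintype.card_prod, mul_comm]

lemma semG_diag (x : Fin n → Fin r × Bool) (i : Fin n) : semG x i i = 0 := by
  simp [semG, semSgn_sq]

lemma semG_eq {x : Fin n → Fin r × Bool} {i i' : Fin n} (h : i ≠ i') :
    semG x i i' = ∑ v, semT v (x i) * semT v (x i') := by
  have : ∀ v, semT v (x i) * semT v (x i')
      = semSgn (x i) * semSgn (x i') * ((if (x i).1 = v then 1 else 0) * (if (x i').1 = v then 1 else 0)) := by
    intro v; unfold semT; ring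
  rw [Finset.sum_congr rfl fun v _ => this v, ← Finset.mul_sum]
  simp only [semG, if_neg h, sub_zero]
  have h2 : ∀ v : Fin r, (if (x i).1 = v then (1:ℝ) else 0) * (if (x i').1 = v then 1 else 0)
      = if (x i).1 = v then (if (x i').1 = v then 1 else 0) else 0 := by
    intro v; by_cases hv : (x i).1 = v <;> simp [hv]
  rw [Finset.sum_congr rfl fun v _ => h2 v, Finset.sum_ite_eq]
  simp [mul_comm]
  by_cases hvv : (x i).1 = (x i').1 <;> simp [hvv, eq_comm]

noncomputable def semPhi {r n : ℕ} (i i' j j' : Fin n) (v w : Fin r) (m : Fin n)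
    (a : Fin r × Bool) : ℝ :=
  (if m = i then semT v a else 1) * (if m = i' then semT v a else 1) *
  ((if m = j then semT w a else 1) * (if m = j' then semT w a else 1))

lemma prod_semPhi (i i' j j' : Fin n) (v w : Fin r) (x : Fin n → Fin r × Bool) :
    ∏ m, semPhi i i' j j' v w m (x m)
      = (semT v (x i) * semT v (x i')) * (semT w (x j) * semT w (x j')) := by
  unfold semPhi
  rw [Finset.prod_mul_distrib, Finset.prod_mul_distrib, Finset.prod_mul_distrib]
  simp [Finset.prod_ite_eq']

lemma prod_eval {i i' : Fin n} (h : i ≠ i') (f : Fin n → ℝ) (c : ℝ)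
    (hrest : ∀ m, m ≠ i → m ≠ i' → f m = c) :
    ∏ m, f m = f i * f i' * c ^ (n - 2) := by
  have hi' : i' ∈ Finset.univ.erase i := Finset.mem_erase.2 ⟨h.symm, Finset.mem_univ i'⟩
  rw [← Finset.mul_prod_erase Finset.univ f (Finset.mem_univ i),
      ← Finset.mul_prod_erase _ f hi']
  have hcongr : ∏ m ∈ (Finset.univ.erase i).erase i', f m
      = ∏ _m ∈ (Finset.univ.erase i).erase i', c := by
    refine Finset.prod_congr rfl fun m hm => ?_
    rcases Finset.mem_erase.1 hm with ⟨hmi', hm2⟩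
    exact hrest m (Finset.mem_erase.1 hm2).1 hmi'
  have hcard : ((Finset.univ.erase i).erase i').card = n - 2 := by
    rw [Finset.card_erase_of_mem hi', Finset.card_erase_of_mem (Finset.mem_univ i),
      Finset.card_univ, Fintype.card_fin]
    omega
  rw [hcongr, Finset.prod_const, hcard, mul_assoc]

lemma good_case_sum (hr0 : 0 < r) {i i' : Fin n} (hii' : i ≠ i')
    (f : Fin r → Fin r → Fin n → ℝ)
    (hfi : ∀ v w, f v w i = if v = w then 2 else 0)
    (hfi' : ∀ v w, f v w i' = if v = w then 2 else 0)
    (hrest : ∀ v w m, m ≠ i → m ≠ i' → f v w m = 2 * r) :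
    ∑ v : Fin r, ∑ w : Fin r, ∏ m, f v w m = (2*(r:ℝ))^n / r := by
  have h2n : 2 ≤ n := by
    have : 1 < Fintype.card (Fin n) := Fintype.one_lt_card_iff_nontrivial.2 ⟨⟨i, i', hii'⟩⟩
    simp at this; omega
  have hprod : ∀ v w, ∏ m, f v w m
      = (if v = w then (2:ℝ) else 0) * (if v = w then 2 else 0) * (2*(r:ℝ))^(n-2) := by
    intro v w
    rw [prod_eval hii' (f v w) (2*r) (hrest v w), hfi, hfi']
  rw [Finset.sum_congr rfl fun v _ => Finset.sum_congr rfl fun w _ => hprod v w]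
  have : ∀ v : Fin r, ∑ w : Fin r,
      (if v = w then (2:ℝ) else 0) * (if v = w then 2 else 0) * (2*(r:ℝ))^(n-2)
      = 4 * (2*(r:ℝ))^(n-2) := by
    intro v
    rw [Finset.sum_congr rfl (g := fun w => if v = w then 4 * (2*(r:ℝ))^(n-2) else 0)
      (fun w _ => by by_cases hvw : v = w <;> norm_num [hvw]), Finset.sum_ite_eq]
    simp
  rw [Finset.sum_congr rfl fun v _ => this v, Finset.sum_const, Finset.card_univ,
    Fintype.card_fin]
  have hpow : (2*(r:ℝ))^n = (2*(r:ℝ))^(n-2) * (2*(r:ℝ))^2 := by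
    rw [← pow_add]; congr 1; omega
  have hr : (r:ℝ) ≠ 0 := by positivity
  rw [hpow, eq_div_iff hr]
  push_cast
  ring

lemma semG_orth (hr0 : 0 < r) {i i' j j' : Fin n} (hii' : i ≠ i') (hjj' : j ≠ j') :
    ∑ x : Fin n → Fin r × Bool, semG x i i' * semG x j j'
      = ((if i = j ∧ i' = j' then (1:ℝ) else 0) + (if i = j' ∧ i' = j then 1 else 0))
        * ((2*(r:ℝ))^n / r) := by
  have step1 : ∑ x : Fin n → Fin r × Bool, semG x i i' * semG x j j'
      = ∑ v : Fin r, ∑ w : Fin r, ∑ x : Fin n → Fin r × Bool,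
          ∏ m, semPhi i i' j j' v w m (x m) := by
    have e1 : ∀ x : Fin n → Fin r × Bool, semG x i i' * semG x j j'
        = ∑ v : Fin r, ∑ w : Fin r,
            (semT v (x i) * semT v (x i')) * (semT w (x j) * semT w (x j')) := by
      intro x
      rw [semG_eq hii', semG_eq hjj',
        Finset.sum_mul_sum Finset.univ Finset.univ
          (fun v => semT v (x i) * semT v (x i')) (fun w => semT w (x j) * semT w (x j'))]
    calc ∑ x : Fin n → Fin r × Bool, semG x i i' * semG x j j'
        = ∑ x : Fin n → Fin r × Bool, ∑ v : Fin r, ∑ w : Fin r,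
            (semT v (x i) * semT v (x i')) * (semT w (x j) * semT w (x j')) :=
          Finset.sum_congr rfl fun x _ => e1 x
      _ = ∑ v : Fin r, ∑ x : Fin n → Fin r × Bool, ∑ w : Fin r,
            (semT v (x i) * semT v (x i')) * (semT w (x j) * semT w (x j')) :=
          Finset.sum_comm
      _ = ∑ v : Fin r, ∑ w : Fin r, ∑ x : Fin n → Fin r × Bool,
            (semT v (x i) * semT v (x i')) * (semT w (x j) * semT w (x j')) :=
          Finset.sum_congr rfl fun v _ => Finset.sum_comm
      _ = ∑ v : Fin r, ∑ w : Fin r, ∑ x : Fin n → Fin r × Bool,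
            ∏ m, semPhi i i' j j' v w m (x m) :=
          Finset.sum_congr rfl fun v _ => Finset.sum_congr rfl fun w _ =>
            Finset.sum_congr rfl fun x _ => (prod_semPhi i i' j j' v w x).symm
  have step2 : ∀ v w : Fin r, ∑ x : Fin n → Fin r × Bool,
      ∏ m, semPhi i i' j j' v w m (x m) = ∏ m, ∑ a : Fin r × Bool, semPhi i i' j j' v w m a :=
    by intro v w; rw [Fintype.prod_sum]
  rw [step1, Finset.sum_congr rfl fun v _ => Finset.sum_congr rfl fun w _ => step2 v w]
  by_cases hij : i = j
  · subst hij
    by_cases hij' : i' = j'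
    · subst hij'
      rw [good_case_sum hr0 hii' _ ?_ ?_ ?_]
      · have h1 : (i = i ∧ i' = i') := ⟨rfl, rfl⟩
        have h2 : ¬ (i = i' ∧ i' = i) := fun h => hii' h.1
        rw [if_pos h1, if_neg h2]
        ring
      · intro v w
        simp [semPhi, hii', Ne.symm hii', ← sum_semT_mul v w]
      · intro v w
        simp [semPhi, hii', Ne.symm hii', ← sum_semT_mul v w]
      · intro v w m hmi hmi'
        simp [semPhi, hmi, hmi', ← sum_one_fin_bool (r := r)]
    · -- bad: coordinate j' appears once
      have h1 : ¬ (i = i ∧ i' = j') := fun h => hij' h.2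
      have h2 : ¬ (i = j' ∧ i' = i) := fun h => hii' h.2.symm
      rw [if_neg h1, if_neg h2]
      have e1 : j' ≠ i := fun h => hjj' h.symm
      have e2 : j' ≠ i' := fun h => hij' h.symm
      have hz : ∀ v w : Fin r, ∏ m, ∑ a : Fin r × Bool, semPhi i i' i j' v w m a = 0 := by
        intro v w
        refine Finset.prod_eq_zero (Finset.mem_univ j') ?_
        simp [semPhi, e1, e2, sum_semT w]
      simp [hz]
  · by_cases hij2 : i = j'
    · subst hij2
      by_cases hi'j : i' = j
      · subst hi'j
        rw [good_case_sum hr0 hii' _ ?_ ?_ ?_]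
        · have h1 : ¬ (i = i' ∧ i' = i) := fun h => hii' h.1
          have h2 : (i = i ∧ i' = i') := ⟨rfl, rfl⟩
          rw [if_neg h1, if_pos h2]
          ring
        · intro v w
          simp [semPhi, hii', Ne.symm hii', ← sum_semT_mul v w, mul_comm]
        · intro v w
          simp [semPhi, hii', Ne.symm hii', ← sum_semT_mul v w, mul_comm]
        · intro v w m hmi hmi'
          simp [semPhi, hmi, hmi', ← sum_one_fin_bool (r := r)]
      · -- bad: coordinate i' appears once
        have h1 : ¬ (i = j ∧ i' = i) := fun h => hii' h.2.symm
        have h2 : ¬ (i = i ∧ i' = j) := fun h => hi'j h.2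
        rw [if_neg h1, if_neg h2]
        have hz : ∀ v w : Fin r, ∏ m, ∑ a : Fin r × Bool, semPhi i i' j i v w m a = 0 := by
          intro v w
          refine Finset.prod_eq_zero (Finset.mem_univ i') ?_
          simp [semPhi, Ne.symm hii', hi'j, sum_semT v]
        simp [hz]
    · -- bad: coordinate i appears once
      have h1 : ¬ (i = j ∧ i' = j') := fun h => hij h.1
      have h2 : ¬ (i = j' ∧ i' = j) := fun h => hij2 h.1
      rw [if_neg h1, if_neg h2]
      have hz : ∀ v w : Fin r, ∏ m, ∑ a : Fin r × Bool, semPhi i i' j j' v w m a = 0 := by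
        intro v w
        refine Finset.prod_eq_zero (Finset.mem_univ i) ?_
        simp [semPhi, hii', hij, hij2, sum_semT v]
      simp [hz]

noncomputable def semKappa {n : ℕ} (D : ℝ) (p q : Fin n × Fin n) : ℝ :=
  if p.1 = p.2 ∨ q.1 = q.2 then 0
  else ((if p = q then 1 else 0) + (if p = q.swap then 1 else 0)) * D

lemma semKappa_nonneg {D : ℝ} (hD : 0 ≤ D) (p q : Fin n × Fin n) : 0 ≤ semKappa D p q := by
  unfold semKappa
  split
  · exact le_refl 0
  · positivity

lemma semKappa_le {D : ℝ} (hD : 0 ≤ D) (p q : Fin n × Fin n) :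
    semKappa D p q ≤ ((if p = q then 1 else 0) + (if p = q.swap then 1 else 0)) * D := by
  unfold semKappa
  split
  · positivity
  · exact le_refl _

lemma semG_orth_pair (hr0 : 0 < r) (p q : Fin n × Fin n) :
    ∑ x : Fin n → Fin r × Bool, semG x p.1 p.2 * semG x q.1 q.2
      = semKappa ((2*(r:ℝ))^n / r) p q := by
  by_cases hp : p.1 = p.2
  · have h0 : ∀ x : Fin n → Fin r × Bool, semG x p.1 p.2 = 0 := by
      intro x; rw [hp]; exact semG_diag x p.2
    simp [semKappa, hp, h0, semG_diag]
  · by_cases hq : q.1 = q.2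
    · have h0 : ∀ x : Fin n → Fin r × Bool, semG x q.1 q.2 = 0 := by
        intro x; rw [hq]; exact semG_diag x q.2
      simp [semKappa, hq, h0, semG_diag]
    · rw [semG_orth hr0 hp hq]
      have e1 : (if p.1 = q.1 ∧ p.2 = q.2 then (1:ℝ) else 0) = if p = q then 1 else 0 := by
        by_cases h : p.1 = q.1 ∧ p.2 = q.2
        · rw [if_pos h, if_pos (Prod.ext h.1 h.2)]
        · rw [if_neg h, if_neg (fun hc : p = q => h ⟨by rw [hc], by rw [hc]⟩)]
      have e2 : (if p.1 = q.2 ∧ p.2 = q.1 then (1:ℝ) else 0) = if p = q.swap then 1 else 0 := by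
        by_cases h : p.1 = q.2 ∧ p.2 = q.1
        · rw [if_pos h, if_pos (Prod.ext h.1 h.2)]
        · rw [if_neg h, if_neg (fun hc : p = q.swap => h ⟨by rw [hc]; rfl, by rw [hc]; rfl⟩)]
      rw [e1, e2]
      simp only [semKappa]
      rw [if_neg (show ¬(p.1 = p.2 ∨ q.1 = q.2) from by tauto)]

lemma sem_second_moment (hr0 : 0 < r) (c : Fin n → Fin n → ℝ) :
    ∑ x : Fin n → Fin r × Bool, (∑ i, ∑ i', c i i' * semG x i i')^2
      ≤ (2*(r:ℝ))^n / r * (2 * ∑ i, ∑ i', (c i i')^2) := by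
  set D : ℝ := (2*(r:ℝ))^n / r with hD
  have hD0 : 0 ≤ D := by positivity
  have base : ∀ x : Fin n → Fin r × Bool,
      ∑ i, ∑ i', c i i' * semG x i i' = ∑ p : Fin n × Fin n, c p.1 p.2 * semG x p.1 p.2 :=
    fun x => (Fintype.sum_prod_type (fun p : Fin n × Fin n => c p.1 p.2 * semG x p.1 p.2)).symm
  have expand : ∑ x : Fin n → Fin r × Bool, (∑ i, ∑ i', c i i' * semG x i i')^2
      = ∑ p : Fin n × Fin n, ∑ q : Fin n × Fin n, (c p.1 p.2 * c q.1 q.2) * semKappa D p q := by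
    calc ∑ x : Fin n → Fin r × Bool, (∑ i, ∑ i', c i i' * semG x i i')^2
        = ∑ x : Fin n → Fin r × Bool, ∑ p : Fin n × Fin n, ∑ q : Fin n × Fin n,
            (c p.1 p.2 * c q.1 q.2) * (semG x p.1 p.2 * semG x q.1 q.2) := by
          refine Finset.sum_congr rfl fun x _ => ?_
          rw [base x, sq, Finset.sum_mul_sum]
          exact Finset.sum_congr rfl fun p _ => Finset.sum_congr rfl fun q _ => by ring
      _ = ∑ p : Fin n × Fin n, ∑ q : Fin n × Fin n, ∑ x : Fin n → Fin r × Bool,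
            (c p.1 p.2 * c q.1 q.2) * (semG x p.1 p.2 * semG x q.1 q.2) := by
          rw [Finset.sum_comm]
          exact Finset.sum_congr rfl fun p _ => Finset.sum_comm
      _ = ∑ p : Fin n × Fin n, ∑ q : Fin n × Fin n,
            (c p.1 p.2 * c q.1 q.2) * semKappa D p q := by
          refine Finset.sum_congr rfl fun p _ => Finset.sum_congr rfl fun q _ => ?_
          rw [← Finset.mul_sum, semG_orth_pair hr0 p q]
  rw [expand]
  have bound : ∀ p q : Fin n × Fin n, (c p.1 p.2 * c q.1 q.2) * semKappa D p q
      ≤ ((c p.1 p.2 ^ 2 + c q.1 q.2 ^ 2) / 2)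
        * (((if p = q then 1 else 0) + (if p = q.swap then 1 else 0)) * D) := by
    intro p q
    have h1 : c p.1 p.2 * c q.1 q.2 ≤ (c p.1 p.2 ^ 2 + c q.1 q.2 ^ 2) / 2 := by
      nlinarith [sq_nonneg (c p.1 p.2 - c q.1 q.2)]
    calc (c p.1 p.2 * c q.1 q.2) * semKappa D p q
        ≤ ((c p.1 p.2 ^ 2 + c q.1 q.2 ^ 2) / 2) * semKappa D p q :=
          mul_le_mul_of_nonneg_right h1 (semKappa_nonneg hD0 p q)
      _ ≤ _ := mul_le_mul_of_nonneg_left (semKappa_le hD0 p q) (by positivity)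
  calc ∑ p : Fin n × Fin n, ∑ q : Fin n × Fin n, (c p.1 p.2 * c q.1 q.2) * semKappa D p q
      ≤ ∑ p : Fin n × Fin n, ∑ q : Fin n × Fin n, ((c p.1 p.2 ^ 2 + c q.1 q.2 ^ 2) / 2)
          * (((if p = q then 1 else 0) + (if p = q.swap then 1 else 0)) * D) :=
        Finset.sum_le_sum fun p _ => Finset.sum_le_sum fun q _ => bound p q
    _ = ∑ p : Fin n × Fin n, (c p.1 p.2 ^ 2 * D
          + ((c p.1 p.2 ^ 2 + c p.2 p.1 ^ 2) / 2) * D) := by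
        refine Finset.sum_congr rfl fun p _ => ?_
        have hflip : ∀ q : Fin n × Fin n, (p = q.swap) = (p.swap = q) := fun q =>
          propext ⟨fun h => by rw [h, Prod.swap_swap], fun h => by rw [← h, Prod.swap_swap]⟩
        have split : ∀ q : Fin n × Fin n, ((c p.1 p.2 ^ 2 + c q.1 q.2 ^ 2) / 2)
            * (((if p = q then 1 else 0) + (if p = q.swap then 1 else 0)) * D)
            = ((c p.1 p.2 ^ 2 + c q.1 q.2 ^ 2) / 2 * D) * (if p = q then 1 else 0)
              + ((c p.1 p.2 ^ 2 + c q.1 q.2 ^ 2) / 2 * D) * (if p.swap = q then 1 else 0) := by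
          intro q
          simp only [hflip q]
          ring
        rw [Finset.sum_congr rfl fun q _ => split q, Finset.sum_add_distrib]
        simp only [mul_ite, mul_one, mul_zero]
        rw [Finset.sum_ite_eq, Finset.sum_ite_eq]
        simp only [Finset.mem_univ, if_true, Prod.fst_swap, Prod.snd_swap]
        ring
    _ = D * (2 * ∑ p : Fin n × Fin n, c p.1 p.2 ^ 2) := by
        rw [Finset.sum_add_distrib]
        have hswap : ∑ p : Fin n × Fin n, c p.2 p.1 ^ 2 = ∑ p : Fin n × Fin n, c p.1 p.2 ^ 2 := by
          rw [Fintype.sum_prod_type, Fintype.sum_prod_type]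
          exact Finset.sum_comm
        rw [← Finset.sum_mul, ← Finset.sum_mul, ← Finset.sum_div,
          Finset.sum_add_distrib, hswap]
        ring
    _ = D * (2 * ∑ i, ∑ i', (c i i')^2) := by
        rw [Fintype.sum_prod_type (f := fun p : Fin n × Fin n => c p.1 p.2 ^ 2)]

lemma matrix_entry {m₁ m₂ : ℕ} (x : Fin n → Fin r × Bool)
    (A : Matrix (Fin n) (Fin m₁) ℝ) (B : Matrix (Fin n) (Fin m₂) ℝ) (k : Fin m₁) (l : Fin m₂) :
    (Aᵀ * (Matrix.of fun j i => if (x i).1 = j then (if (x i).2 then (1:ℝ) else -1) else 0)ᵀ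
      * (Matrix.of fun j i => if (x i).1 = j then (if (x i).2 then (1:ℝ) else -1) else 0) * B
      - Aᵀ * B) k l
    = ∑ i, ∑ i', (A i k * B i' l) * semG x i i' := by
  set Sm : Matrix (Fin r) (Fin n) ℝ :=
    Matrix.of fun j i => if (x i).1 = j then (if (x i).2 then (1:ℝ) else -1) else 0 with hSm
  have hSmval : ∀ j i, Sm j i = if (x i).1 = j then semSgn (x i) else 0 := by
    intro j i
    rw [hSm]
    rfl
  have hSS : ∀ i i', ∑ j, Sm j i * Sm j i'
      = (if (x i).1 = (x i').1 then semSgn (x i) * semSgn (x i') else 0) := by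
    intro i i'
    have hpt : ∀ j, Sm j i * Sm j i'
        = if (x i).1 = j then (if (x i').1 = j then semSgn (x i) * semSgn (x i') else 0)
          else 0 := by
      intro j
      rw [hSmval, hSmval]
      by_cases h1 : (x i).1 = j <;> by_cases h2 : (x i').1 = j <;> simp [h1, h2]
    rw [Finset.sum_congr rfl fun j _ => hpt j, Finset.sum_ite_eq]
    simp only [Finset.mem_univ, if_true]
    by_cases h : (x i).1 = (x i').1
    · simp [h, eq_comm]
    · rw [if_neg h, if_neg (fun hc : (x i').1 = (x i).1 => h hc.symm)]
  have E1 : (Aᵀ * Smᵀ * Sm * B) k l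
      = ∑ i, ∑ i', (A i k * B i' l) *
          (if (x i).1 = (x i').1 then semSgn (x i) * semSgn (x i') else 0) := by
    have h1 : ∀ i', (Aᵀ * Smᵀ * Sm) k i' = ∑ i, A i k * (∑ j, Sm j i * Sm j i') := by
      intro i'
      rw [Matrix.mul_apply]
      rw [Finset.sum_congr rfl fun j _ => by
        rw [Matrix.mul_apply, Finset.sum_mul]]
      rw [Finset.sum_comm]
      refine Finset.sum_congr rfl fun i _ => ?_
      rw [Finset.mul_sum]
      refine Finset.sum_congr rfl fun j _ => ?_
      simp only [Matrix.transpose_apply]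
      ring
    rw [Matrix.mul_apply]
    rw [Finset.sum_congr rfl fun i' _ => by rw [h1 i', Finset.sum_mul]]
    rw [Finset.sum_comm]
    refine Finset.sum_congr rfl fun i _ => Finset.sum_congr rfl fun i' _ => ?_
    rw [hSS]
    ring
  have E2 : (Aᵀ * B) k l = ∑ i, ∑ i', (A i k * B i' l) * (if i = i' then 1 else 0) := by
    rw [Matrix.mul_apply]
    refine Finset.sum_congr rfl fun i _ => ?_
    have : ∀ i', (A i k * B i' l) * (if i = i' then (1:ℝ) else 0)
        = if i = i' then A i k * B i' l else 0 := by
      intro i'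
      by_cases h : i = i' <;> simp [h]
    rw [Finset.sum_congr rfl fun i' _ => this i', Finset.sum_ite_eq]
    simp [Matrix.transpose_apply]
  rw [Matrix.sub_apply, E1, E2, ← Finset.sum_sub_distrib]
  refine Finset.sum_congr rfl fun i _ => ?_
  rw [← Finset.sum_sub_distrib]
  refine Finset.sum_congr rfl fun i' _ => ?_
  unfold semG
  ring

open MeasureTheory ProbabilityTheory

lemma frobNorm'_nonneg {m n : ℕ} (M : Matrix (Fin m) (Fin n) ℝ) : 0 ≤ frobNorm' M :=
  Real.sqrt_nonneg _

lemma frobNorm'_sq {m n : ℕ} (M : Matrix (Fin m) (Fin n) ℝ) :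
    frobNorm' M ^ 2 = ∑ i, ∑ j, (M i j) ^ 2 := by
  rw [frobNorm', Real.sq_sqrt]
  positivity

lemma frobNorm'_eq_zero {m n : ℕ} {M : Matrix (Fin m) (Fin n) ℝ}
    (h : frobNorm' M = 0) : M = 0 := by
  have h2 : ∑ i, ∑ j, (M i j)^2 = 0 := by
    have := frobNorm'_sq M
    rw [h] at this
    simpa using this.symm
  ext i j
  have hi := (Finset.sum_eq_zero_iff_of_nonneg (fun i _ => by positivity)).1 h2 i
    (Finset.mem_univ i)
  have hj := (Finset.sum_eq_zero_iff_of_nonneg (fun j _ => by positivity)).1 hi j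
    (Finset.mem_univ j)
  simpa using pow_eq_zero_iff (n := 2) (by norm_num) |>.1 hj

lemma point_mass {r n : ℕ} (hr0 : 0 < r)
    {Ω : Type} [MeasurableSpace Ω] (P : Measure Ω) [IsProbabilityMeasure P]
    (X : Ω → Fin n → Fin r × Bool)
    (hmeas : ∀ i, Measurable (fun ω => X ω i))
    (hindep : iIndepFun (fun i ω => X ω i) P)
    (hunif : ∀ i, P.map (fun ω => X ω i)
      = (@PMF.uniformOfFintype (Fin r × Bool) _ ⟨(⟨0, hr0⟩, true)⟩).toMeasure)
    (x : Fin n → Fin r × Bool) :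
    P ((fun ω => X ω) ⁻¹' {x}) = (((r * 2 : ℕ) : ℝ≥0∞))⁻¹ ^ n := by
  haveI : Nonempty (Fin r × Bool) := ⟨(⟨0, hr0⟩, true)⟩
  have hset : (fun ω => X ω) ⁻¹' {x} = ⋂ i ∈ Finset.univ, (fun ω => X ω i) ⁻¹' {x i} := by
    ext ω
    simp [funext_iff]
  rw [hset, hindep.measure_inter_preimage_eq_mul Finset.univ
    (fun i _ => measurableSet_singleton (x i))]
  have hval : ∀ i, P ((fun ω => X ω i) ⁻¹' {x i}) = (((r * 2 : ℕ) : ℝ≥0∞))⁻¹ := by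
    intro i
    rw [← Measure.map_apply (hmeas i) (measurableSet_singleton _), hunif i,
      PMF.toMeasure_apply_singleton _ _ (measurableSet_singleton _),
      PMF.uniformOfFintype_apply]
    congr 1
    simp [Fintype.card_prod]
  rw [Finset.prod_congr rfl fun i _ => hval i, Finset.prod_const]
  simp

set_option maxHeartbeats 1000000 in
/-- Approximate matrix product guarantee for sparse embedding (CountSketch) matrices:
with `(hᵢ, σᵢ)` i.i.d. uniform on `Fin r × {±1}`, the matrix `S` with `S[h(i), i] = σ(i)`
and zeros elsewhere satisfies, for `r > 18/(ε²δ)` and any fixed `A, B` with `n` rows,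
`Pr[‖AᵀSᵀSB − AᵀB‖_F > ε‖A‖_F‖B‖_F] ≤ δ`. -/
theorem sparse_embedding_approx_matrix_product
    {r n : ℕ} (hr0 : 0 < r)
    (Ω : Type) [MeasurableSpace Ω] (P : Measure Ω) [IsProbabilityMeasure P]
    (X : Ω → Fin n → Fin r × Bool)
    (hmeas : ∀ i, Measurable (fun ω => X ω i))
    (hindep : iIndepFun (fun i ω => X ω i) P)
    (hunif : ∀ i, P.map (fun ω => X ω i)
      = (@PMF.uniformOfFintype (Fin r × Bool) _ ⟨(⟨0, hr0⟩, true)⟩).toMeasure)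
    (ε δ : ℝ) (hε : 0 < ε) (hε' : ε < 1 / 2) (hδ : 0 < δ) (hδ' : δ < 1 / 2)
    (hrbig : (r : ℝ) > 18 / (ε ^ 2 * δ))
    (S : Ω → Matrix (Fin r) (Fin n) ℝ)
    (hS : ∀ ω, S ω = Matrix.of fun j i =>
      if (X ω i).1 = j then (if (X ω i).2 then (1 : ℝ) else -1) else 0)
    (m₁ m₂ : ℕ) (A : Matrix (Fin n) (Fin m₁) ℝ) (B : Matrix (Fin n) (Fin m₂) ℝ) :
    P {ω | frobNorm' (Aᵀ * (S ω)ᵀ * S ω * B - Aᵀ * B) > ε * frobNorm' A * frobNorm' B}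
      ≤ ENNReal.ofReal δ := by
  classical
  set t : ℝ := ε * frobNorm' A * frobNorm' B with ht
  set Sm : (Fin n → Fin r × Bool) → Matrix (Fin r) (Fin n) ℝ := fun x =>
    Matrix.of fun j i => if (x i).1 = j then (if (x i).2 then (1 : ℝ) else -1) else 0 with hSmdef
  set F : (Fin n → Fin r × Bool) → ℝ := fun x =>
    frobNorm' (Aᵀ * (Sm x)ᵀ * Sm x * B - Aᵀ * B) with hF
  set sset : Finset (Fin n → Fin r × Bool) := Finset.univ.filter (fun x => F x > t) with hsset
  -- Step 1: rewrite the event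
  have hevent : {ω | frobNorm' (Aᵀ * (S ω)ᵀ * S ω * B - Aᵀ * B) > t}
      = (fun ω => X ω) ⁻¹' (↑sset : Set (Fin n → Fin r × Bool)) := by
    ext ω
    simp only [Set.mem_setOf_eq, Set.mem_preimage, hsset, Finset.coe_filter,
      Finset.mem_univ, true_and, hF, hSmdef]
    rw [hS ω]
  rw [hevent]
  -- Step 2: measure of the event as a sum of point masses
  have hXm : Measurable (fun ω => X ω) := measurable_pi_lambda _ hmeas
  have hsplit : P ((fun ω => X ω) ⁻¹' (↑sset : Set (Fin n → Fin r × Bool)))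
      = ∑ x ∈ sset, P ((fun ω => X ω) ⁻¹' {x}) := by
    have hU : ((↑sset : Set (Fin n → Fin r × Bool)))
        = ⋃ x ∈ sset, ({x} : Set (Fin n → Fin r × Bool)) := by
      ext y; simp
    rw [hU, Set.preimage_iUnion₂, measure_biUnion_finset]
    · intro x _ y _ hxy
      refine Set.disjoint_left.2 fun ω h1 h2 => hxy ?_
      simp only [Set.mem_preimage, Set.mem_singleton_iff] at h1 h2
      rw [← h1, ← h2]
    · intro x _
      exact hXm (measurableSet_singleton x)
  rw [hsplit, Finset.sum_congr rfl fun x _ => point_mass hr0 P X hmeas hindep hunif x,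
    Finset.sum_const, nsmul_eq_mul]
  -- Step 3: pass to real numbers
  have hcast : (sset.card : ℝ≥0∞) * ((((r * 2 : ℕ) : ℝ≥0∞))⁻¹ ^ n)
      = ENNReal.ofReal ((sset.card : ℝ) * (((r * 2 : ℕ) : ℝ))⁻¹ ^ n) := by
    have hr2 : (0:ℝ) < ((r * 2 : ℕ) : ℝ) := by positivity
    rw [ENNReal.ofReal_mul (by positivity), ENNReal.ofReal_pow (by positivity),
      ENNReal.ofReal_inv_of_pos hr2, ENNReal.ofReal_natCast, ENNReal.ofReal_natCast]
  rw [hcast]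
  refine ENNReal.ofReal_le_ofReal ?_
  -- Step 4: the real inequality
  by_cases hA0 : frobNorm' A = 0
  · have hAz : A = 0 := frobNorm'_eq_zero hA0
    have : sset = ∅ := by
      rw [hsset]
      refine Finset.filter_false_of_mem fun x _ => ?_
      simp only [hF, hAz, ht, hA0, not_lt]
      simp [Matrix.transpose_zero, Matrix.zero_mul, frobNorm']
    simp [this]
    positivity
  by_cases hB0 : frobNorm' B = 0
  · have hBz : B = 0 := frobNorm'_eq_zero hB0
    have : sset = ∅ := by
      rw [hsset]
      refine Finset.filter_false_of_mem fun x _ => ?_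
      simp only [hF, hBz, ht, hB0, not_lt]
      simp [Matrix.mul_zero, frobNorm']
    simp [this]
    positivity
  -- main case
  have hfA : 0 < frobNorm' A := lt_of_le_of_ne (Real.sqrt_nonneg _) (Ne.symm hA0)
  have hfB : 0 < frobNorm' B := lt_of_le_of_ne (Real.sqrt_nonneg _) (Ne.symm hB0)
  set SA : ℝ := ∑ i, ∑ k, (A i k)^2 with hSA
  set SB : ℝ := ∑ i, ∑ l, (B i l)^2 with hSB
  have hSAval : frobNorm' A ^ 2 = SA := frobNorm'_sq A
  have hSBval : frobNorm' B ^ 2 = SB := frobNorm'_sq B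
  have hSApos : 0 < SA := by rw [← hSAval]; positivity
  have hSBpos : 0 < SB := by rw [← hSBval]; positivity
  have ht0 : 0 ≤ t := by
    rw [ht]
    have := Real.sqrt_nonneg (∑ i, ∑ j, (A i j)^2)
    positivity
  have cheb : (sset.card : ℝ) * t^2 ≤ ∑ x : Fin n → Fin r × Bool, F x ^ 2 := by
    calc (sset.card : ℝ) * t^2 = ∑ _x ∈ sset, t^2 := by
          rw [Finset.sum_const, nsmul_eq_mul]
      _ ≤ ∑ x ∈ sset, F x ^ 2 := Finset.sum_le_sum fun x hx =>
          pow_le_pow_left₀ ht0 (le_of_lt (Finset.mem_filter.1 hx).2) 2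
      _ ≤ ∑ x : Fin n → Fin r × Bool, F x ^ 2 :=
          Finset.sum_le_sum_of_subset_of_nonneg (Finset.subset_univ _)
            (fun x _ _ => by positivity)
  have hFsq : ∀ x : Fin n → Fin r × Bool,
      F x ^ 2 = ∑ k, ∑ l, (∑ i, ∑ i', (A i k * B i' l) * semG x i i')^2 := by
    intro x
    rw [hF]
    rw [frobNorm'_sq]
    exact Finset.sum_congr rfl fun k _ => Finset.sum_congr rfl fun l _ => by
      rw [matrix_entry]
  have hprodsum : ∑ k, ∑ l, ∑ i, ∑ i', (A i k * B i' l)^2 = SA * SB := by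
    calc ∑ k, ∑ l, ∑ i, ∑ i', (A i k * B i' l)^2
        = ∑ k, ∑ l, ∑ i, ∑ i', (A i k)^2 * (B i' l)^2 :=
          Finset.sum_congr rfl fun k _ => Finset.sum_congr rfl fun l _ =>
            Finset.sum_congr rfl fun i _ => Finset.sum_congr rfl fun i' _ => by ring
      _ = ∑ k, ∑ i, ∑ l, ∑ i', (A i k)^2 * (B i' l)^2 :=
          Finset.sum_congr rfl fun k _ => Finset.sum_comm
      _ = ∑ i, ∑ k, ∑ l, ∑ i', (A i k)^2 * (B i' l)^2 := Finset.sum_comm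
      _ = ∑ i, ∑ k, ∑ i', ∑ l, (A i k)^2 * (B i' l)^2 :=
          Finset.sum_congr rfl fun i _ => Finset.sum_congr rfl fun k _ => Finset.sum_comm
      _ = SA * SB := by
          rw [hSA, hSB, Finset.sum_mul]
          refine Finset.sum_congr rfl fun i _ => ?_
          rw [Finset.sum_mul]
          refine Finset.sum_congr rfl fun k _ => ?_
          rw [Finset.mul_sum]
          refine Finset.sum_congr rfl fun i' _ => ?_
          rw [Finset.mul_sum]
  have hsum : ∑ x : Fin n → Fin r × Bool, F x ^ 2
      ≤ (2*(r:ℝ))^n / r * (2 * (SA * SB)) := by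
    calc ∑ x : Fin n → Fin r × Bool, F x ^ 2
        = ∑ k, ∑ l, ∑ x : Fin n → Fin r × Bool,
            (∑ i, ∑ i', (A i k * B i' l) * semG x i i')^2 := by
          rw [Finset.sum_congr rfl fun x _ => hFsq x, Finset.sum_comm]
          exact Finset.sum_congr rfl fun k _ => Finset.sum_comm
      _ ≤ ∑ k, ∑ l, (2*(r:ℝ))^n / r * (2 * ∑ i, ∑ i', (A i k * B i' l)^2) :=
          Finset.sum_le_sum fun k _ => Finset.sum_le_sum fun l _ =>
            sem_second_moment hr0 _
      _ = (2*(r:ℝ))^n / r * (2 * (SA * SB)) := by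
          simp only [← Finset.mul_sum, ← hprodsum]
  have tsq : t^2 = ε^2 * (SA * SB) := by
    rw [ht, mul_pow, mul_pow, hSAval, hSBval]
    ring
  have hkey : (sset.card : ℝ) * ε^2 ≤ (2*(r:ℝ))^n / r * 2 := by
    have h1 : ((sset.card:ℝ) * ε^2) * (SA*SB) ≤ ((2*(r:ℝ))^n / r * 2) * (SA*SB) := by
      calc ((sset.card:ℝ) * ε^2) * (SA*SB) = (sset.card:ℝ) * t^2 := by rw [tsq]; ring
        _ ≤ ∑ x : Fin n → Fin r × Bool, F x ^ 2 := cheb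
        _ ≤ (2*(r:ℝ))^n / r * (2 * (SA * SB)) := hsum
        _ = ((2*(r:ℝ))^n / r * 2) * (SA*SB) := by ring
    exact le_of_mul_le_mul_right h1 (by positivity)
  have hrpos : (0:ℝ) < r := by exact_mod_cast hr0
  have h18 : 18 < (r:ℝ) * (ε^2*δ) := by
    rw [gt_iff_lt, div_lt_iff₀ (by positivity)] at hrbig
    linarith
  have hpow : (0:ℝ) < (2*(r:ℝ))^n := by positivity
  have hgoalcast : (((r*2:ℕ):ℝ)) = 2*(r:ℝ) := by push_cast; ring
  rw [hgoalcast, inv_pow, ← div_eq_mul_inv, div_le_iff₀ hpow]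
  have hkey' : (sset.card:ℝ) * ε^2 * r ≤ 2*(2*(r:ℝ))^n := by
    have h2 := mul_le_mul_of_nonneg_right hkey hrpos.le
    have h3 : (2*(r:ℝ))^n / r * 2 * r = 2*(2*(r:ℝ))^n := by
      field_simp
    linarith [h3 ▸ h2]
  nlinarith [mul_le_mul_of_nonneg_right hkey' hδ.le,
    mul_le_mul_of_nonneg_left h18.le (Nat.cast_nonneg sset.card : (0:ℝ) ≤ sset.card),
    mul_nonneg hδ.le hpow.le]
end

section
/- Let a > (2−τ)/τ · (√(2/(2−τ)) + 1) for τ ∈ (0,1), and define step sizes α_i = 8/(μ(i+a)). Suppose a nonnegative sequence satisfies E_{i+1} ≤ (1−τ)(1+γ)E_i + (1−τ)(1+1/γ)α_i² G² with γ = τ/(2(1−τ)) and E_0 = 0. Then for all i, E_i ≤ ((1−τ)(2−τ)(1+1/a)² α_i² G²) / (τ(1 − (1−τ/2)(1+1/a)²)). -/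
/-- Induction bound on the compression error sequence in error-feedback SGD with step
sizes `αᵢ = 8/(μ(i+a))`: if `E₀ = 0` and
`E_{i+1} ≤ (1−τ)(1+γ)Eᵢ + (1−τ)(1+1/γ)αᵢ²G²` with `γ = τ/(2(1−τ))`, then for all `i`,
`Eᵢ ≤ (1−τ)(2−τ)(1+1/a)²αᵢ²G² / (τ(1 − (1−τ/2)(1+1/a)²))`. -/
theorem error_feedback_error_sequence_bound
    (τ μ G a : ℝ) (hτ0 : 0 < τ) (hτ1 : τ < 1) (hμ : 0 < μ)
    (ha : a > (2 - τ) / τ * (Real.sqrt (2 / (2 - τ)) + 1))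
    (α : ℕ → ℝ) (hα : ∀ i, α i = 8 / (μ * (i + a)))
    (γ : ℝ) (hγ : γ = τ / (2 * (1 - τ)))
    (E : ℕ → ℝ) (hE0 : E 0 = 0) (hEnn : ∀ i, 0 ≤ E i)
    (hrec : ∀ i, E (i + 1) ≤ (1 - τ) * (1 + γ) * E i
        + (1 - τ) * (1 + 1 / γ) * (α i) ^ 2 * G ^ 2) :
    ∀ i, E i ≤ (1 - τ) * (2 - τ) * (1 + 1 / a) ^ 2 * (α i) ^ 2 * G ^ 2
        / (τ * (1 - (1 - τ / 2) * (1 + 1 / a) ^ 2)) := by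
  have h2τ : (0:ℝ) < 2 - τ := by linarith
  have h1τ : (0:ℝ) < 1 - τ := by linarith
  set s := Real.sqrt (2 / (2 - τ)) with hs
  have hs0 : 0 ≤ s := Real.sqrt_nonneg _
  have hs2 : s ^ 2 = 2 / (2 - τ) := Real.sq_sqrt (by positivity)
  have hgt1 : (1:ℝ) < 2 / (2 - τ) := by
    rw [lt_div_iff₀ h2τ]; linarith
  have hs1 : 1 < s := by nlinarith
  have ha0 : 0 < a := lt_trans (by positivity) ha
  have hid : (2 - τ) / τ * (s + 1) * (s - 1) = 1 := by
    have h : (2 - τ) / τ * (s + 1) * (s - 1) = (2 - τ) / τ * (s ^ 2 - 1) := by ring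
    rw [h, hs2]
    field_simp
    ring
  have hkey : 1 < a * (s - 1) := by
    have h := mul_lt_mul_of_pos_right ha (sub_pos.mpr hs1)
    linarith [hid.le]
  have h1a : 1 + 1 / a < s := by
    have h : 1 / a < s - 1 := by rw [div_lt_iff₀ ha0, mul_comm]; exact hkey
    linarith
  have h1a0 : (0:ℝ) < 1 + 1 / a := by positivity
  have hb : (1 + 1 / a) ^ 2 < 2 / (2 - τ) := by
    rw [← hs2]; nlinarith
  have hD0 : 0 < 1 - (1 - τ / 2) * (1 + 1 / a) ^ 2 := by
    have h12 : (0:ℝ) < 1 - τ / 2 := by linarith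
    have h := mul_lt_mul_of_pos_left hb h12
    have heq : (1 - τ / 2) * (2 / (2 - τ)) = 1 := by
      field_simp
    linarith [heq.le]
  set D : ℝ := τ * (1 - (1 - τ / 2) * (1 + 1 / a) ^ 2) with hDdef
  have hD : 0 < D := mul_pos hτ0 hD0
  set C : ℝ := (1 - τ) * (2 - τ) * (1 + 1 / a) ^ 2 / D with hCdef
  have hC0 : 0 ≤ C := by positivity
  clear_value s C D
  -- simplify recursion coefficients
  have e1 : (1 - τ) * (1 + γ) = 1 - τ / 2 := by
    rw [hγ]
    field_simp
    ring
  have e2 : (1 - τ) * (1 + 1 / γ) = (1 - τ) * (2 - τ) / τ := by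
    have hg : 1 / γ = 2 * (1 - τ) / τ := by rw [hγ, one_div_div]
    rw [hg]
    field_simp
    ring_nf
  -- step size ratio
  have hαpos : ∀ i : ℕ, 0 < α i := by
    intro i; rw [hα]; positivity
  have hratio : ∀ i : ℕ, α i ≤ (1 + 1 / a) * α (i + 1) := by
    intro i
    rw [hα i, hα (i + 1)]
    push_cast
    have hi : (0:ℝ) ≤ (i : ℝ) := Nat.cast_nonneg i
    have hp1 : (0:ℝ) < μ * ((i:ℝ) + a) := by positivity
    have hp2 : (0:ℝ) < μ * ((i:ℝ) + 1 + a) := by positivity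
    have hrw : (1 + 1 / a) * (8 / (μ * ((i:ℝ) + 1 + a)))
        = ((1 + 1 / a) * 8) / (μ * ((i:ℝ) + 1 + a)) := by ring
    rw [hrw, div_le_div_iff₀ hp1 hp2]
    have hu : a * (1 / a) = 1 := by field_simp
    have hu0 : (0:ℝ) ≤ 1 / a := by positivity
    nlinarith [mul_nonneg (mul_nonneg hμ.le hu0) hi]
  have hratio2 : ∀ i : ℕ, (α i) ^ 2 ≤ (1 + 1 / a) ^ 2 * (α (i + 1)) ^ 2 := by
    intro i
    have h := pow_le_pow_left₀ (hαpos i).le (hratio i) 2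
    rw [mul_pow] at h
    exact h
  -- main induction
  have main : ∀ i, E i ≤ C * ((α i) ^ 2 * G ^ 2) := by
    intro i
    induction i with
    | zero => rw [hE0]; positivity
    | succ n ih =>
      have h1 := hrec n
      rw [e1, e2] at h1
      have h12 : (0:ℝ) ≤ 1 - τ / 2 := by linarith
      have hX : (α n) ^ 2 * G ^ 2 ≤ (1 + 1 / a) ^ 2 * ((α (n + 1)) ^ 2 * G ^ 2) := by
        calc (α n) ^ 2 * G ^ 2 ≤ (1 + 1 / a) ^ 2 * (α (n + 1)) ^ 2 * G ^ 2 :=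
              mul_le_mul_of_nonneg_right (hratio2 n) (sq_nonneg G)
          _ = (1 + 1 / a) ^ 2 * ((α (n + 1)) ^ 2 * G ^ 2) := by ring
      have hmul := mul_le_mul_of_nonneg_left ih h12
      have hassoc : (1 - τ) * (2 - τ) / τ * (α n) ^ 2 * G ^ 2
          = (1 - τ) * (2 - τ) / τ * ((α n) ^ 2 * G ^ 2) := by ring
      have h2 : E (n + 1) ≤ (1 - τ / 2) * (C * ((α n) ^ 2 * G ^ 2))
          + (1 - τ) * (2 - τ) / τ * ((α n) ^ 2 * G ^ 2) := by
        linarith [hassoc.le, hassoc.ge]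
      have hcoef : 0 ≤ (1 - τ / 2) * C + (1 - τ) * (2 - τ) / τ := by positivity
      have h3 : (1 - τ / 2) * (C * ((α n) ^ 2 * G ^ 2))
          + (1 - τ) * (2 - τ) / τ * ((α n) ^ 2 * G ^ 2)
          = ((1 - τ / 2) * C + (1 - τ) * (2 - τ) / τ) * ((α n) ^ 2 * G ^ 2) := by ring
      have h4 : ((1 - τ / 2) * C + (1 - τ) * (2 - τ) / τ) * ((α n) ^ 2 * G ^ 2)
          ≤ ((1 - τ / 2) * C + (1 - τ) * (2 - τ) / τ)
            * ((1 + 1 / a) ^ 2 * ((α (n + 1)) ^ 2 * G ^ 2)) :=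
        mul_le_mul_of_nonneg_left hX hcoef
      have hCD : C * D = (1 - τ) * (2 - τ) * (1 + 1 / a) ^ 2 := by
        rw [hCdef]; exact div_mul_cancel₀ _ hD.ne'
      have hfix : ((1 - τ / 2) * C + (1 - τ) * (2 - τ) / τ) * (1 + 1 / a) ^ 2 = C := by
        apply mul_left_cancel₀ hτ0.ne'
        have hND : τ * (1 - τ / 2) * (1 + 1 / a) ^ 2 = τ - D := by rw [hDdef]; ring
        have hq : (1 - τ) * (2 - τ) / τ * τ = (1 - τ) * (2 - τ) :=
          div_mul_cancel₀ _ hτ0.ne'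
        calc τ * (((1 - τ / 2) * C + (1 - τ) * (2 - τ) / τ) * (1 + 1 / a) ^ 2)
            = (τ * (1 - τ / 2) * (1 + 1 / a) ^ 2) * C
              + ((1 - τ) * (2 - τ) / τ * τ) * (1 + 1 / a) ^ 2 := by ring
          _ = (τ - D) * C + (1 - τ) * (2 - τ) * (1 + 1 / a) ^ 2 := by rw [hND, hq]
          _ = τ * C - (C * D - (1 - τ) * (2 - τ) * (1 + 1 / a) ^ 2) := by ring
          _ = τ * C := by rw [hCD]; ring
      calc E (n + 1) ≤ ((1 - τ / 2) * C + (1 - τ) * (2 - τ) / τ) * ((α n) ^ 2 * G ^ 2) := by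
            rw [← h3]; exact h2
        _ ≤ ((1 - τ / 2) * C + (1 - τ) * (2 - τ) / τ)
            * ((1 + 1 / a) ^ 2 * ((α (n + 1)) ^ 2 * G ^ 2)) := h4
        _ = (((1 - τ / 2) * C + (1 - τ) * (2 - τ) / τ) * (1 + 1 / a) ^ 2)
            * ((α (n + 1)) ^ 2 * G ^ 2) := by ring
        _ = C * ((α (n + 1)) ^ 2 * G ^ 2) := by rw [hfix]
  intro i
  calc E i ≤ C * ((α i) ^ 2 * G ^ 2) := main i
    _ = (1 - τ) * (2 - τ) * (1 + 1 / a) ^ 2 * (α i) ^ 2 * G ^ 2 / D := by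
        rw [hCdef]; ring
end
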